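/- arXiv:1708.02620 — 2 statements merged into one kernel-verified Lean document; each statement's English description precedes it below -/
import Mathlib

section
/- (Davis–Kahan sin-Theta bound specialization) Let L and L~ be n×n real symmetric matrices. Let Y and Y~ be n×(K-1) matrices whose columns are orthonormal eigenvectors of L/n and L~/n corresponding to their 2nd through K-th smallest eigenvalues, and suppose the eigenvalues λ_2(L~/n) = ... = λ_K(L~/n) = t are all equal. Define δ = min{ t - 0, λ_{K+1}(L/n) - t } and assume δ > 0 and the 2nd through K-th smallest eigenvalues of L/n lie outside of both intervals [0, t - δ) and (t + δ, ∞) appropriately so that the spectral separation holds. Then the Frobenius norm of sin Θ(Y, Y~), where Θ is the diagonal matrix of principal angles between the column spaces, satisfies ||sin Θ(Y, Y~)||_F ≤ ||L - L~||_F / (n δ). -/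
open Matrix Finset

lemma dk_sumsq_eq_trace {m p : ℕ} (A : Matrix (Fin m) (Fin p) ℝ) :
    ∑ i, ∑ j, A i j ^ 2 = Matrix.trace (Aᵀ * A) := by
  rw [Finset.sum_comm]
  simp [Matrix.trace, Matrix.mul_apply, Matrix.diag, pow_two]

/-- Davis–Kahan sin-Θ specialization: with `Y`, `Ỹ` the
eigenvector matrices of `L/n`, `L̃/n` for the 2nd through `K`-th smallest
eigenvalues (monotone enumerations `μ`, `μt`), where `μt` is constantly `t` on
those indices, `δ = min(t, λ_{K+1}(L/n) - t) > 0`, and the remaining spectrum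
of `L/n` is separated from `t` by `δ`, the Frobenius norm of `sin Θ(Y,Ỹ)`
(equal to `√((K-1) - ‖Yᵀ Ỹ‖_F²)`) is at most `‖L - L̃‖_F / (n δ)`. -/
theorem davis_kahan_specialization (n K : ℕ) (hK : 2 ≤ K) (hnK : K + 1 ≤ n)
    (L Lt : Matrix (Fin n) (Fin n) ℝ) (hL : L.IsSymm) (hLt : Lt.IsSymm)
    (U Ut : Matrix (Fin n) (Fin n) ℝ) (μ μt : Fin n → ℝ)
    (hU : Uᵀ * U = 1) (hd : (n:ℝ)⁻¹ • L = U * Matrix.diagonal μ * Uᵀ)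
    (hm : Monotone μ)
    (hUt : Utᵀ * Ut = 1) (hdt : (n:ℝ)⁻¹ • Lt = Ut * Matrix.diagonal μt * Utᵀ)
    (hmt : Monotone μt)
    (t : ℝ) (hμt : ∀ j : Fin n, 1 ≤ (j:ℕ) → (j:ℕ) ≤ K - 1 → μt j = t)
    (Y Yt : Matrix (Fin n) (Fin (K-1)) ℝ)
    (hY : ∀ (i : Fin n) (j : Fin (K-1)),
        Y i j = U i ⟨j.1 + 1, by have := j.isLt; omega⟩)
    (hYt : ∀ (i : Fin n) (j : Fin (K-1)),
        Yt i j = Ut i ⟨j.1 + 1, by have := j.isLt; omega⟩)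
    (δ : ℝ) (hδdef : δ = min t (μ ⟨K, by omega⟩ - t)) (hδ : 0 < δ)
    (hsep0 : μ ⟨0, by omega⟩ ≤ t - δ)
    (hsepK : ∀ j : Fin n, K ≤ (j:ℕ) → t + δ ≤ μ j) :
    Real.sqrt ((K - 1 : ℝ) - Matrix.trace ((Yᵀ * Yt)ᵀ * (Yᵀ * Yt)))
      ≤ Real.sqrt (∑ i, ∑ j, (L i j - Lt i j)^2) / ((n:ℝ) * δ) := by
  have hn : 0 < n := by omega
  have hnR : (0:ℝ) < (n:ℝ) := by exact_mod_cast hn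
  have hUUT : U * Uᵀ = 1 := mul_eq_one_comm.mp hU
  have hUtUtT : Ut * Utᵀ = 1 := mul_eq_one_comm.mp hUt
  set E : Matrix (Fin n) (Fin n) ℝ := (n:ℝ)⁻¹ • (L - Lt) with hE
  set W : Matrix (Fin n) (Fin (K-1)) ℝ := Uᵀ * Yt with hW
  set P : Matrix (Fin (K-1)) (Fin (K-1)) ℝ := Yᵀ * Yt with hPdef
  -- the embedding of column indices
  set emb : Fin (K-1) → Fin n := fun c => ⟨c.1 + 1, by have := c.isLt; omega⟩ with hemb
  have hinj : Function.Injective emb := by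
    intro a b h
    have : a.1 + 1 = b.1 + 1 := congrArg Fin.val h
    exact Fin.ext (by omega)
  -- Yt columns are Ut columns
  have hYt' : ∀ i c, Yt i c = Ut i (emb c) := fun i c => hYt i c
  have hY' : ∀ i c, Y i c = U i (emb c) := fun i c => hY i c
  -- the selector matrix
  have hQ : ∀ (j : Fin n) (c : Fin (K-1)),
      (Utᵀ * Yt) j c = if j = emb c then (1:ℝ) else 0 := by
    intro j c
    have h1 : (Utᵀ * Yt) j c = (Utᵀ * Ut) j (emb c) := by
      simp only [Matrix.mul_apply, Matrix.transpose_apply, hYt']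
    rw [h1, hUt, Matrix.one_apply]
  -- eigen relation for Lt
  have heig : ((n:ℝ)⁻¹ • Lt) * Yt = t • Yt := by
    rw [hdt]
    simp only [Matrix.mul_assoc]
    have hDQ : Matrix.diagonal μt * (Utᵀ * Yt) = t • (Utᵀ * Yt) := by
      ext j c
      simp only [Matrix.diagonal_mul, Matrix.smul_apply, smul_eq_mul, hQ]
      by_cases h : j = emb c
      · have h1 : 1 ≤ ((emb c : Fin n) : ℕ) := by simp [hemb]
        have h2 : ((emb c : Fin n) : ℕ) ≤ K - 1 := by
          have := c.isLt; simp [hemb]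
        simp [h, hμt (emb c) h1 h2]
      · simp [h]
    rw [hDQ, Matrix.mul_smul, ← Matrix.mul_assoc, hUtUtT, Matrix.one_mul]
  -- key identity
  have hM : Uᵀ * (E * Yt) = Matrix.diagonal μ * W - t • W := by
    have hEY : E * Yt = ((n:ℝ)⁻¹ • L) * Yt - t • Yt := by
      rw [hE, smul_sub, Matrix.sub_mul, heig]
    rw [hEY, Matrix.mul_sub, Matrix.mul_smul, ← hW]
    congr 1
    rw [hd]
    simp only [← Matrix.mul_assoc]
    rw [hU, Matrix.one_mul, Matrix.mul_assoc]
  have hMent : ∀ (j : Fin n) (c : Fin (K-1)),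
      (Uᵀ * (E * Yt)) j c = (μ j - t) * W j c := by
    intro j c
    rw [hM]
    simp only [Matrix.sub_apply, Matrix.diagonal_mul, Matrix.smul_apply, smul_eq_mul]
    ring
  -- Frobenius invariance under Uᵀ
  have froU : ∀ (N : Matrix (Fin n) (Fin (K-1)) ℝ),
      ∑ j, ∑ c, (Uᵀ * N) j c ^ 2 = ∑ i, ∑ c, N i c ^ 2 := by
    intro N
    rw [dk_sumsq_eq_trace, dk_sumsq_eq_trace]
    congr 1
    rw [Matrix.transpose_mul, Matrix.transpose_transpose]
    simp only [← Matrix.mul_assoc]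
    rw [Matrix.mul_assoc Nᵀ U Uᵀ, hUUT, Matrix.mul_one]
  -- Frobenius of E * Ut equals that of E
  have froEUt : ∑ i, ∑ j, (E * Ut) i j ^ 2 = ∑ i, ∑ j, E i j ^ 2 := by
    rw [dk_sumsq_eq_trace, dk_sumsq_eq_trace]
    rw [Matrix.transpose_mul, mul_assoc, ← mul_assoc Eᵀ, Matrix.trace_mul_comm,
      mul_assoc, hUtUtT, mul_one, Matrix.trace_mul_comm]
  -- total weight of W is K - 1
  have hW2 : ∑ j, ∑ c, W j c ^ 2 = (K:ℝ) - 1 := by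
    rw [dk_sumsq_eq_trace]
    have : Wᵀ * W = Ytᵀ * Yt := by
      rw [hW, Matrix.transpose_mul, Matrix.transpose_transpose]
      simp only [← Matrix.mul_assoc]
      rw [Matrix.mul_assoc Ytᵀ U Uᵀ, hUUT, Matrix.mul_one]
    rw [this]
    have hYtYt : ∀ c : Fin (K-1), (Ytᵀ * Yt) c c = 1 := by
      intro c
      have h1 : (Ytᵀ * Yt) c c = (Utᵀ * Ut) (emb c) (emb c) := by
        simp only [Matrix.mul_apply, Matrix.transpose_apply, hYt']
      rw [h1, hUt, Matrix.one_apply_eq]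
    rw [Matrix.trace]
    simp only [Matrix.diag]
    rw [Finset.sum_congr rfl (fun c _ => hYtYt c)]
    simp only [Finset.sum_const, Finset.card_univ, Fintype.card_fin, nsmul_eq_mul, mul_one]
    have : (1:ℕ) ≤ K := by omega
    push_cast [Nat.cast_sub this]
    ring
  -- P entries are W entries
  have hP : ∀ (a c : Fin (K-1)), P a c = W (emb a) c := by
    intro a c
    simp only [hPdef, hW, Matrix.mul_apply, Matrix.transpose_apply, hY']
  set Simg : Finset (Fin n) := Finset.univ.image emb with hSimg
  have hsumP : Matrix.trace (Pᵀ * P) = ∑ j ∈ Simg, ∑ c, W j c ^ 2 := by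
    rw [← dk_sumsq_eq_trace, hSimg, Finset.sum_image (fun a _ b _ h => hinj h)]
    exact Finset.sum_congr rfl fun a _ => Finset.sum_congr rfl fun c _ => by rw [hP]
  have hXeq : (K - 1 : ℝ) - Matrix.trace (Pᵀ * P)
      = ∑ j ∈ Finset.univ \ Simg, ∑ c, W j c ^ 2 := by
    rw [Finset.sum_sdiff_eq_sub (Finset.subset_univ _), hW2, hsumP]
  -- gap bound for indices outside the image
  have hgap : ∀ j ∈ Finset.univ \ Simg, δ ^ 2 ≤ (μ j - t) ^ 2 := by
    intro j hj
    rw [Finset.mem_sdiff, hSimg, Finset.mem_image] at hj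
    have hnot : ¬ (1 ≤ j.1 ∧ j.1 ≤ K - 1) := by
      intro ⟨h1, h2⟩
      exact hj.2 ⟨⟨j.1 - 1, by omega⟩, Finset.mem_univ _, Fin.ext (by simp [hemb]; omega)⟩
    rcases Nat.lt_or_ge j.1 K with hlt | hge
    · have hj0 : j.1 = 0 := by omega
      have hje : j = ⟨0, by omega⟩ := Fin.ext hj0
      have : μ j ≤ t - δ := hje ▸ hsep0
      nlinarith [hδ.le]
    · have := hsepK j hge
      nlinarith [hδ.le]
  -- main chain
  have hchain : δ ^ 2 * ((K - 1 : ℝ) - Matrix.trace (Pᵀ * P)) ≤ ∑ i, ∑ j, E i j ^ 2 := by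
    rw [hXeq, Finset.mul_sum]
    calc ∑ j ∈ Finset.univ \ Simg, δ ^ 2 * ∑ c, W j c ^ 2
        ≤ ∑ j ∈ Finset.univ \ Simg, ∑ c, (μ j - t) ^ 2 * W j c ^ 2 := by
          refine Finset.sum_le_sum fun j hj => ?_
          rw [Finset.mul_sum]
          exact Finset.sum_le_sum fun c _ =>
            mul_le_mul_of_nonneg_right (hgap j hj) (sq_nonneg _)
      _ ≤ ∑ j, ∑ c, (μ j - t) ^ 2 * W j c ^ 2 := by
          refine Finset.sum_le_sum_of_subset_of_nonneg (Finset.sdiff_subset) fun j _ _ => ?_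
          exact Finset.sum_nonneg fun c _ => mul_nonneg (sq_nonneg _) (sq_nonneg _)
      _ = ∑ j, ∑ c, (Uᵀ * (E * Yt)) j c ^ 2 := by
          refine Finset.sum_congr rfl fun j _ => Finset.sum_congr rfl fun c _ => ?_
          rw [hMent, mul_pow]
      _ = ∑ i, ∑ c, (E * Yt) i c ^ 2 := froU _
      _ = ∑ i, ∑ c, (E * Ut) i (emb c) ^ 2 := by
          refine Finset.sum_congr rfl fun i _ => Finset.sum_congr rfl fun c _ => ?_
          congr 1
          simp only [Matrix.mul_apply, hYt']
      _ ≤ ∑ i, ∑ j, (E * Ut) i j ^ 2 := by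
          refine Finset.sum_le_sum fun i _ => ?_
          rw [show ∑ c, (E * Ut) i (emb c) ^ 2 = ∑ j ∈ Simg, (E * Ut) i j ^ 2 by
            rw [hSimg, Finset.sum_image (fun a _ b _ h => hinj h)]]
          exact Finset.sum_le_sum_of_subset_of_nonneg (Finset.subset_univ _)
            fun j _ _ => sq_nonneg _
      _ = ∑ i, ∑ j, E i j ^ 2 := froEUt
  set F : ℝ := ∑ i, ∑ j, (L i j - Lt i j) ^ 2 with hF
  have hFnn : 0 ≤ F :=
    Finset.sum_nonneg fun i _ => Finset.sum_nonneg fun j _ => sq_nonneg _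
  have hE2 : ∑ i, ∑ j, E i j ^ 2 = F / (n:ℝ) ^ 2 := by
    rw [hF, Finset.sum_div]
    refine Finset.sum_congr rfl fun i _ => ?_
    rw [Finset.sum_div]
    refine Finset.sum_congr rfl fun j _ => ?_
    simp only [hE, Matrix.smul_apply, Matrix.sub_apply, smul_eq_mul]
    rw [mul_pow, div_eq_mul_inv, ← inv_pow]
    ring
  have h1 : (K - 1 : ℝ) - Matrix.trace (Pᵀ * P) ≤ (Real.sqrt F / ((n:ℝ) * δ)) ^ 2 := by
    rw [div_pow, Real.sq_sqrt hFnn, mul_pow]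
    rw [le_div_iff₀ (mul_pos (pow_pos hnR 2) (pow_pos hδ 2))]
    rw [hE2] at hchain
    have hn2 : ((n:ℝ)^2) ≠ 0 := pow_ne_zero 2 hnR.ne'
    have h2 : δ ^ 2 * ((K - 1 : ℝ) - Matrix.trace (Pᵀ * P)) * (n:ℝ)^2 ≤ F := by
      have := mul_le_mul_of_nonneg_right hchain (sq_nonneg (n:ℝ))
      rwa [div_mul_cancel₀ _ hn2] at this
    calc ((K - 1 : ℝ) - Matrix.trace (Pᵀ * P)) * ((n:ℝ)^2 * δ^2)
        = δ ^ 2 * ((K - 1 : ℝ) - Matrix.trace (Pᵀ * P)) * (n:ℝ)^2 := by ring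
      _ ≤ F := h2
  have hpos : (0:ℝ) ≤ Real.sqrt F / ((n:ℝ) * δ) :=
    div_nonneg (Real.sqrt_nonneg F) (mul_nonneg hnR.le hδ.le)
  have h3 := Real.sqrt_le_sqrt h1
  rwa [Real.sqrt_sq hpos] at h3
end

section
/- Let M be an m×n matrix whose entries are i.i.d. nonnegative random variables with mean t and bounded fourth moment. Then as m, n → ∞ with m/n → ρ > 0, the scaled matrix M/√(mn) converges almost surely in spectral norm to t · (1_m 1_n^T)/√(mn), i.e., || M/√(mn) - t 1_m 1_n^T/√(mn) || → 0 almost surely. -/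
open MeasureTheory ProbabilityTheory Filter Matrix

/-- The spectral (ℓ²-operator) norm of a real rectangular matrix. -/
noncomputable def specNorm {m n : ℕ} (A : Matrix (Fin m) (Fin n) ℝ) : ℝ :=
  ‖LinearMap.toContinuousLinearMap (Matrix.toEuclideanLin A)‖

section AuxSpectral
open Finset

lemma specNorm_nonneg {m n : ℕ} (A : Matrix (Fin m) (Fin n) ℝ) : 0 ≤ specNorm A :=
  norm_nonneg _

lemma specNorm_smul {m n : ℕ} (c : ℝ) (A : Matrix (Fin m) (Fin n) ℝ) :
    specNorm (c • A) = |c| * specNorm A := by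
  unfold specNorm
  rw [_root_.map_smul, _root_.map_smul]
  rw [norm_smul c (LinearMap.toContinuousLinearMap (toEuclideanLin A)), Real.norm_eq_abs]

lemma specNorm_le_bound {m n : ℕ} (A : Matrix (Fin m) (Fin n) ℝ) {c : ℝ} (hc : 0 ≤ c)
    (h : ∀ x : EuclideanSpace ℝ (Fin n), ‖Matrix.toEuclideanLin A x‖ ≤ c * ‖x‖) :
    specNorm A ≤ c :=
  ContinuousLinearMap.opNorm_le_bound _ hc (fun x => by simpa using h x)

lemma le_specNorm {m n : ℕ} (A : Matrix (Fin m) (Fin n) ℝ) (x : EuclideanSpace ℝ (Fin n)) :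
    ‖Matrix.toEuclideanLin A x‖ ≤ specNorm A * ‖x‖ := by
  simpa [specNorm] using (LinearMap.toContinuousLinearMap (Matrix.toEuclideanLin A)).le_opNorm x

lemma euclid_norm_sq {n : ℕ} (x : EuclideanSpace ℝ (Fin n)) :
    ‖x‖ ^ 2 = ∑ i, x i ^ 2 := by
  rw [EuclideanSpace.norm_eq, Real.sq_sqrt (by positivity)]
  simp [Real.norm_eq_abs, sq_abs]

lemma toEuclideanLin_apply_coord {m n : ℕ} (A : Matrix (Fin m) (Fin n) ℝ)
    (x : EuclideanSpace ℝ (Fin n)) (i : Fin m) :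
    Matrix.toEuclideanLin A x i = ∑ j, A i j * x j := by
  rfl

lemma norm_le_of_sq_le_sq {a b : ℝ} (hb : 0 ≤ b) (ha : 0 ≤ a) (h : a ^ 2 ≤ b ^ 2) : a ≤ b := by
  nlinarith

/-- spectral norm to the 4th is at most the Frobenius norm squared of the Gram matrix. -/
lemma specNorm_pow_four_le {M N : ℕ} (A : Matrix (Fin M) (Fin N) ℝ) :
    specNorm A ^ 4 ≤ ∑ j : Fin N, ∑ l : Fin N, (∑ i : Fin M, A i j * A i l) ^ 2 := by
  set S : ℝ := ∑ j : Fin N, ∑ l : Fin N, (∑ i : Fin M, A i j * A i l) ^ 2 with hS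
  have hS0 : 0 ≤ S := by positivity
  set c : ℝ := Real.sqrt (Real.sqrt S) with hc
  have hc0 : 0 ≤ c := Real.sqrt_nonneg _
  have hc2 : c ^ 2 = Real.sqrt S := Real.sq_sqrt (Real.sqrt_nonneg _)
  have hc4 : c ^ 4 = S := by
    have : c ^ 4 = (c ^ 2) ^ 2 := by ring
    rw [this, hc2, Real.sq_sqrt hS0]
  have key : specNorm A ≤ c := by
    refine specNorm_le_bound A hc0 (fun x => ?_)
    refine norm_le_of_sq_le_sq (by positivity) (norm_nonneg _) ?_
    rw [mul_pow, euclid_norm_sq, euclid_norm_sq, hc2]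
    simp only [toEuclideanLin_apply_coord]
    -- expand the square
    have expand : ∑ i : Fin M, (∑ j : Fin N, A i j * x j) ^ 2
        = ∑ j : Fin N, x j * (∑ l : Fin N, (∑ i : Fin M, A i j * A i l) * x l) := by
      simp only [sq, Finset.sum_mul_sum, Finset.mul_sum, Finset.sum_mul]
      rw [Finset.sum_comm]
      refine Finset.sum_congr rfl (fun j _ => ?_)
      rw [Finset.sum_comm]
      refine Finset.sum_congr rfl (fun l _ => ?_)
      refine Finset.sum_congr rfl (fun i _ => ?_)
      ring
    rw [expand]
    set w : Fin N → ℝ := fun j => ∑ l : Fin N, (∑ i : Fin M, A i j * A i l) * x l with hw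
    have csw : (∑ j : Fin N, x j * w j) ^ 2 ≤ (∑ j : Fin N, x j ^ 2) * ∑ j : Fin N, w j ^ 2 :=
      Finset.sum_mul_sq_le_sq_mul_sq _ _ _
    have hwbound : ∑ j : Fin N, w j ^ 2 ≤ S * ∑ l : Fin N, x l ^ 2 := by
      have : ∀ j : Fin N, w j ^ 2 ≤ (∑ l : Fin N, (∑ i : Fin M, A i j * A i l) ^ 2)
          * ∑ l : Fin N, x l ^ 2 := fun j => Finset.sum_mul_sq_le_sq_mul_sq _ _ _
      calc ∑ j : Fin N, w j ^ 2
          ≤ ∑ j : Fin N, (∑ l : Fin N, (∑ i : Fin M, A i j * A i l) ^ 2) * ∑ l : Fin N, x l ^ 2 :=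
            Finset.sum_le_sum (fun j _ => this j)
        _ = S * ∑ l : Fin N, x l ^ 2 := by rw [← Finset.sum_mul]
    -- now: (∑ x_j w_j) ≤ √S * ∑ x².  We have (∑ x w)² ≤ (∑x²) * ∑ w² ≤ (∑x²)² S
    have h1 : (∑ j : Fin N, x j * w j) ^ 2 ≤ S * (∑ j : Fin N, x j ^ 2) ^ 2 := by
      calc (∑ j : Fin N, x j * w j) ^ 2 ≤ (∑ j : Fin N, x j ^ 2) * ∑ j : Fin N, w j ^ 2 := csw
        _ ≤ (∑ j : Fin N, x j ^ 2) * (S * ∑ l : Fin N, x l ^ 2) := by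
            refine mul_le_mul_of_nonneg_left hwbound (by positivity)
        _ = S * (∑ j : Fin N, x j ^ 2) ^ 2 := by ring
    have hx2 : (0:ℝ) ≤ ∑ j : Fin N, x j ^ 2 := by positivity
    have h2 : ∑ j : Fin N, x j * w j ≤ Real.sqrt S * ∑ j : Fin N, x j ^ 2 := by
      have h3 := Real.sqrt_le_sqrt h1
      rw [Real.sqrt_mul hS0, Real.sqrt_sq hx2] at h3
      calc ∑ j : Fin N, x j * w j ≤ |∑ j : Fin N, x j * w j| := le_abs_self _
        _ = Real.sqrt ((∑ j : Fin N, x j * w j) ^ 2) := (Real.sqrt_sq_eq_abs _).symm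
        _ ≤ Real.sqrt S * ∑ j : Fin N, x j ^ 2 := h3
    calc ∑ j : Fin N, x j * w j ≤ Real.sqrt S * ∑ j : Fin N, x j ^ 2 := h2
      _ = Real.sqrt S * ∑ j : Fin N, x j ^ 2 := rfl
  calc specNorm A ^ 4 ≤ c ^ 4 := by
        refine pow_le_pow_left₀ (specNorm_nonneg A) key 4
    _ = S := hc4

lemma specNorm_submatrix_le (a : ℕ → ℕ → ℝ) {m n M N : ℕ} (hm : m ≤ M) (hn : n ≤ N) :
    specNorm (Matrix.of fun (i : Fin m) (j : Fin n) => a i j)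
      ≤ specNorm (Matrix.of fun (i : Fin M) (j : Fin N) => a i j) := by
  set B : Matrix (Fin M) (Fin N) ℝ := Matrix.of fun (i : Fin M) (j : Fin N) => a i j with hB
  refine specNorm_le_bound _ (specNorm_nonneg B) (fun x => ?_)
  classical
  set u : ℕ → ℝ := fun j => if h : j < n then x ⟨j, h⟩ else 0 with hu
  set y : EuclideanSpace ℝ (Fin N) := (WithLp.equiv 2 (Fin N → ℝ)).symm (fun j => u j) with hy
  have hyapp : ∀ j : Fin N, y j = u j := fun j => rfl
  have hxu : ∀ j : Fin n, x j = u j := by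
    intro j
    rw [hu]
    simp only [j.isLt, dif_pos]
  have hyx : ‖y‖ = ‖x‖ := by
    have h1 : ‖y‖ ^ 2 = ‖x‖ ^ 2 := by
      rw [euclid_norm_sq, euclid_norm_sq]
      have e1 : ∑ j : Fin N, y j ^ 2 = ∑ j ∈ range N, u j ^ 2 := by
        simp only [hyapp]
        exact Fin.sum_univ_eq_sum_range (fun j => u j ^ 2) N
      have e2 : ∑ j : Fin n, x j ^ 2 = ∑ j ∈ range n, u j ^ 2 := by
        simp only [hxu]
        exact Fin.sum_univ_eq_sum_range (fun j => u j ^ 2) n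
      have e3 : ∑ j ∈ range N, u j ^ 2 = ∑ j ∈ range n, u j ^ 2 := by
        refine (Finset.sum_subset (Finset.range_subset_range.2 hn) ?_).symm
        intro j _ hj
        rw [Finset.mem_range, not_lt] at hj
        rw [hu]
        simp [Nat.not_lt.2 hj]
      rw [e1, e2, e3]
    have := congrArg Real.sqrt h1
    rwa [Real.sqrt_sq (norm_nonneg _), Real.sqrt_sq (norm_nonneg _)] at this
  set v : ℕ → ℝ := fun i => ∑ j ∈ range n, a i j * u j with hv
  have hAx : ∀ i : Fin m, (Matrix.toEuclideanLin (Matrix.of fun (i : Fin m) (j : Fin n) => a i j) x) i = v i := by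
    intro i
    rw [toEuclideanLin_apply_coord]
    have : ∀ j : Fin n, (Matrix.of fun (i : Fin m) (j : Fin n) => a i j) i j * x j
        = a i j * u j := by
      intro j; rw [hxu]; rfl
    simp only [this]
    exact Fin.sum_univ_eq_sum_range (fun j => a i j * u j) n
  have hBy : ∀ i : Fin M, (Matrix.toEuclideanLin B y) i = v i := by
    intro i
    rw [toEuclideanLin_apply_coord]
    have : ∀ j : Fin N, B i j * y j = a i j * u j := fun j => rfl
    simp only [this]
    rw [Fin.sum_univ_eq_sum_range (fun j => a i j * u j) N]
    refine (Finset.sum_subset (Finset.range_subset_range.2 hn) ?_).symm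
    intro j _ hj
    rw [Finset.mem_range, not_lt] at hj
    have : u j = 0 := by rw [hu]; simp [Nat.not_lt.2 hj]
    rw [this, mul_zero]
  have hsq : ‖Matrix.toEuclideanLin (Matrix.of fun (i : Fin m) (j : Fin n) => a i j) x‖ ^ 2
      ≤ ‖Matrix.toEuclideanLin B y‖ ^ 2 := by
    rw [euclid_norm_sq, euclid_norm_sq]
    simp only [hAx, hBy]
    rw [Fin.sum_univ_eq_sum_range (fun i => v i ^ 2) m, Fin.sum_univ_eq_sum_range (fun i => v i ^ 2) M]
    exact Finset.sum_le_sum_of_subset_of_nonneg (Finset.range_subset_range.2 hm)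
      (fun i _ _ => sq_nonneg _)
  calc ‖Matrix.toEuclideanLin (Matrix.of fun (i : Fin m) (j : Fin n) => a i j) x‖
      ≤ ‖Matrix.toEuclideanLin B y‖ :=
        norm_le_of_sq_le_sq (norm_nonneg _) (norm_nonneg _) hsq
    _ ≤ specNorm B * ‖y‖ := le_specNorm B y
    _ = specNorm B * ‖x‖ := by rw [hyx]

lemma abs_mul4_le (a b c d : ℝ) : |a * b * c * d| ≤ a^4 + b^4 + c^4 + d^4 := by
  rw [abs_le]
  constructor <;>
  nlinarith [sq_nonneg (a*b - c*d), sq_nonneg (a*b + c*d), sq_nonneg (a^2 - b^2),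
    sq_nonneg (c^2 - d^2), sq_nonneg (a^2 + b^2), sq_nonneg (c^2 + d^2)]

lemma abs_le_pow4_add_one (y : ℝ) : |y| ≤ y^4 + 1 := by
  rcases le_or_gt (|y|) 1 with h | h
  · nlinarith [pow_nonneg (abs_nonneg y) 4, sq_abs y]
  · have h1 : 1 ≤ |y| := h.le
    have : |y| ≤ |y|^4 := le_self_pow₀ h1 (by norm_num)
    calc |y| ≤ |y|^4 := this
      _ = y^4 := by rw [← abs_pow]; exact abs_of_nonneg (by positivity)
      _ ≤ y^4 + 1 := by linarith

lemma sq_le_pow4_add_one (y : ℝ) : y^2 ≤ y^4 + 1 := by nlinarith [sq_nonneg (y^2 - 1)]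

lemma sub_pow4_le (x t : ℝ) : (x - t)^4 ≤ 8 * x^4 + 8 * t^4 := by
  nlinarith [sq_nonneg (x - t), sq_nonneg (x + t), sq_nonneg (x^2 - t^2), sq_nonneg (x^2 + t^2),
    sq_nonneg ((x-t)^2), sq_nonneg (x*t)]

lemma count_diag (K : ℕ) (r : ℝ) :
    ∑ i ∈ range K, ∑ k ∈ range K, (if i = k then r else 0) = K * r := by
  have h : ∀ i ∈ range K, ∑ k ∈ range K, (if i = k then r else 0) = r := by
    intro i hi
    rw [Finset.sum_ite_eq]
    simp [hi]
  rw [Finset.sum_congr rfl h, Finset.sum_const, Finset.card_range, nsmul_eq_mul]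

lemma moment_bound {Ω : Type*} [MeasurableSpace Ω] (P : Measure Ω) [IsProbabilityMeasure P]
    (X : ℕ × ℕ → Ω → ℝ) (hmeas : ∀ p, Measurable (X p))
    (hindep : iIndepFun X P)
    (hident : ∀ p, IdentDistrib (X p) (X (0, 0)) P P)
    (t : ℝ) (hmean : ∫ ω, X (0, 0) ω ∂P = t)
    (hmom4 : Integrable (fun ω => (X (0, 0) ω) ^ 4) P)
    (M N : ℕ) :
    Integrable (fun ω => ∑ j ∈ Finset.range N, ∑ l ∈ Finset.range N,
        (∑ i ∈ Finset.range M, (X (i,j) ω - t) * (X (i,l) ω - t)) ^ 2) P ∧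
    ∫ ω, (∑ j ∈ Finset.range N, ∑ l ∈ Finset.range N,
        (∑ i ∈ Finset.range M, (X (i,j) ω - t) * (X (i,l) ω - t)) ^ 2) ∂P
      ≤ M * N * (∫ ω, (X (0,0) ω - t)^4 ∂P)
        + M * N * (M + N) * (∫ ω, (X (0,0) ω - t)^2 ∂P) ^ 2 := by
  classical
  set Y : ℕ × ℕ → Ω → ℝ := fun p ω => X p ω - t with hY
  have hYmeas : ∀ p, Measurable (Y p) := fun p => (hmeas p).sub measurable_const
  have hYident : ∀ p, IdentDistrib (Y p) (Y (0,0)) P P := fun p =>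
    (hident p).comp (measurable_id.sub measurable_const)
  set μ4 : ℝ := ∫ ω, (Y (0,0) ω)^4 ∂P with hμ4
  set σ2 : ℝ := ∫ ω, (Y (0,0) ω)^2 ∂P with hσ2
  have hY4int0 : Integrable (fun ω => Y (0,0) ω ^ 4) P := by
    refine Integrable.mono' (((hmom4.const_mul 8).add (integrable_const (8 * t^4)))) ?_ ?_
    · exact ((hYmeas (0,0)).pow_const 4).aestronglyMeasurable
    · refine Filter.Eventually.of_forall (fun ω => ?_)
      have h1 : |Y (0,0) ω ^ 4| = Y (0,0) ω ^ 4 := abs_of_nonneg (by positivity)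
      rw [Real.norm_eq_abs, h1]
      exact sub_pow4_le _ _
  have hYident4 : ∀ p, IdentDistrib (fun ω => Y p ω ^ 4) (fun ω => Y (0,0) ω ^ 4) P P :=
    fun p => (hYident p).comp (measurable_id.pow_const 4)
  have hYident2 : ∀ p, IdentDistrib (fun ω => Y p ω ^ 2) (fun ω => Y (0,0) ω ^ 2) P P :=
    fun p => (hYident p).comp (measurable_id.pow_const 2)
  have hint4 : ∀ p, Integrable (fun ω => Y p ω ^ 4) P :=
    fun p => ((hYident4 p).integrable_iff).2 hY4int0
  have hμ4p : ∀ p, ∫ ω, Y p ω ^ 4 ∂P = μ4 := fun p => (hYident4 p).integral_eq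
  have hσ2p : ∀ p, ∫ ω, Y p ω ^ 2 ∂P = σ2 := fun p => (hYident2 p).integral_eq
  have hint2 : ∀ p, Integrable (fun ω => Y p ω ^ 2) P := by
    intro p
    refine Integrable.mono' ((hint4 p).add (integrable_const 1)) ?_ ?_
    · exact ((hYmeas p).pow_const 2).aestronglyMeasurable
    · refine Filter.Eventually.of_forall (fun ω => ?_)
      rw [Real.norm_eq_abs, abs_of_nonneg (by positivity)]
      exact sq_le_pow4_add_one _
  have hint1 : ∀ p, Integrable (Y p) P := by
    intro p
    refine Integrable.mono' ((hint4 p).add (integrable_const 1)) ?_ ?_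
    · exact (hYmeas p).aestronglyMeasurable
    · exact Filter.Eventually.of_forall (fun ω => abs_le_pow4_add_one _)
  have hintX : ∀ p, Integrable (X p) P := by
    intro p
    have h1 : Integrable (fun ω => Y p ω + t) P := (hint1 p).add (integrable_const t)
    have h2 : (fun ω => Y p ω + t) = X p := by funext ω; simp [hY]
    rwa [h2] at h1
  have hEY : ∀ p, ∫ ω, Y p ω ∂P = 0 := by
    intro p
    have h1 : ∫ ω, X p ω ∂P = t := ((hident p).integral_eq).trans hmean
    simp only [hY]
    rw [integral_sub (hintX p) (integrable_const t)]
    simp [h1]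
  have hprod4 : ∀ p1 p2 p3 p4 : ℕ × ℕ,
      Integrable (fun ω => (Y p1 ω * Y p2 ω) * (Y p3 ω * Y p4 ω)) P := by
    intro p1 p2 p3 p4
    refine Integrable.mono'
      ((((hint4 p1).add (hint4 p2)).add (hint4 p3)).add (hint4 p4)) ?_ ?_
    · exact (((hYmeas p1).mul (hYmeas p2)).mul ((hYmeas p3).mul (hYmeas p4))).aestronglyMeasurable
    · refine Filter.Eventually.of_forall (fun ω => ?_)
      rw [Real.norm_eq_abs]
      have : (Y p1 ω * Y p2 ω) * (Y p3 ω * Y p4 ω) = Y p1 ω * Y p2 ω * Y p3 ω * Y p4 ω := by ring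
      rw [this]
      simpa [add_assoc] using abs_mul4_le (Y p1 ω) (Y p2 ω) (Y p3 ω) (Y p4 ω)
  have hσ2nn : 0 ≤ σ2 := by
    rw [hσ2]; exact integral_nonneg (fun ω => sq_nonneg _)
  have hμ4nn : 0 ≤ μ4 := by
    rw [hμ4]; exact integral_nonneg (fun ω => by positivity)
  -- expectation of each cross term
  have hsmall : ∀ p q : ℕ × ℕ, p ≠ q → ∫ ω, Y p ω * Y q ω ∂P = 0 := by
    intro p q hpq
    have hind : IndepFun (Y p) (Y q) P :=
      (hindep.indepFun hpq).comp (measurable_id.sub measurable_const)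
        (measurable_id.sub measurable_const)
    rw [hind.integral_fun_mul_eq_mul_integral (hYmeas p).aestronglyMeasurable (hYmeas q).aestronglyMeasurable,
      hEY p, hEY q, mul_zero]
  have hterm : ∀ i k j l : ℕ,
      ∫ ω, (Y (i,j) ω * Y (i,l) ω) * (Y (k,j) ω * Y (k,l) ω) ∂P
        ≤ (if i = k ∧ j = l then μ4 else 0)
          + ((if i = k then σ2^2 else 0) + (if j = l then σ2^2 else 0)) := by
    intro i k j l
    by_cases hik : i = k
    · by_cases hjl : j = l
      · subst hik; subst hjl
        have he : (fun ω => (Y (i,j) ω * Y (i,j) ω) * (Y (i,j) ω * Y (i,j) ω))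
            = fun ω => Y (i,j) ω ^ 4 := by funext ω; ring
        rw [he, hμ4p]
        simp only [and_self, if_pos rfl]
        simp
        nlinarith [sq_nonneg σ2]
      · subst hik
        have hne : ((i, j) : ℕ × ℕ) ≠ (i, l) := by simp [hjl]
        have hind : IndepFun (fun ω => Y (i,j) ω ^ 2) (fun ω => Y (i,l) ω ^ 2) P := by
          have := (hindep.indepFun hne).comp
            (φ := fun x : ℝ => (x - t)^2) (ψ := fun x : ℝ => (x - t)^2)
            ((measurable_id.sub measurable_const).pow_const 2)
            ((measurable_id.sub measurable_const).pow_const 2)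
          exact this
        have he : (fun ω => (Y (i,j) ω * Y (i,l) ω) * (Y (i,j) ω * Y (i,l) ω))
            = fun ω => Y (i,j) ω ^ 2 * Y (i,l) ω ^ 2 := by funext ω; ring
        rw [he, hind.integral_fun_mul_eq_mul_integral ((hYmeas _).pow_const 2).aestronglyMeasurable
          ((hYmeas _).pow_const 2).aestronglyMeasurable, hσ2p, hσ2p]
        simp [hjl]
        nlinarith [sq_nonneg σ2]
    · by_cases hjl : j = l
      · subst hjl
        have hne : ((i, j) : ℕ × ℕ) ≠ (k, j) := by simp [hik]
        have hind : IndepFun (fun ω => Y (i,j) ω ^ 2) (fun ω => Y (k,j) ω ^ 2) P := by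
          have := (hindep.indepFun hne).comp
            (φ := fun x : ℝ => (x - t)^2) (ψ := fun x : ℝ => (x - t)^2)
            ((measurable_id.sub measurable_const).pow_const 2)
            ((measurable_id.sub measurable_const).pow_const 2)
          exact this
        have he : (fun ω => (Y (i,j) ω * Y (i,j) ω) * (Y (k,j) ω * Y (k,j) ω))
            = fun ω => Y (i,j) ω ^ 2 * Y (k,j) ω ^ 2 := by funext ω; ring
        rw [he, hind.integral_fun_mul_eq_mul_integral ((hYmeas _).pow_const 2).aestronglyMeasurable
          ((hYmeas _).pow_const 2).aestronglyMeasurable, hσ2p, hσ2p]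
        simp [hik]
        nlinarith [sq_nonneg σ2]
      · have hpair := hindep.indepFun_prodMk_prodMk hmeas (i,j) (i,l) (k,j) (k,l)
          (by simp [hik]) (by simp [hik]) (by simp [hik]) (by simp [hik])
        have hg : Measurable (fun v : ℝ × ℝ => (v.1 - t) * (v.2 - t)) :=
          (measurable_fst.sub measurable_const).mul (measurable_snd.sub measurable_const)
        have hind : IndepFun (fun ω => Y (i,j) ω * Y (i,l) ω)
            (fun ω => Y (k,j) ω * Y (k,l) ω) P := hpair.comp hg hg
        rw [hind.integral_fun_mul_eq_mul_integral ((hYmeas _).mul (hYmeas _)).aestronglyMeasurable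
          ((hYmeas _).mul (hYmeas _)).aestronglyMeasurable,
          hsmall (i,j) (i,l) (by simp [hjl]), zero_mul]
        simp [hik, hjl]
  -- expand the square into a fourfold sum
  have hexpand : ∀ ω, (∑ j ∈ range N, ∑ l ∈ range N,
        (∑ i ∈ range M, Y (i,j) ω * Y (i,l) ω) ^ 2)
      = ∑ j ∈ range N, ∑ l ∈ range N, ∑ i ∈ range M, ∑ k ∈ range M,
          (Y (i,j) ω * Y (i,l) ω) * (Y (k,j) ω * Y (k,l) ω) := by
    intro ω
    refine Finset.sum_congr rfl (fun j _ => Finset.sum_congr rfl (fun l _ => ?_))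
    rw [sq, Finset.sum_mul_sum]
  have hint_inner : ∀ j l, Integrable (fun ω => ∑ i ∈ range M, ∑ k ∈ range M,
      (Y (i,j) ω * Y (i,l) ω) * (Y (k,j) ω * Y (k,l) ω)) P := by
    intro j l
    refine integrable_finset_sum _ (fun i _ => integrable_finset_sum _ (fun k _ => ?_))
    exact hprod4 _ _ _ _
  have hint_l : ∀ j, Integrable (fun ω => ∑ l ∈ range N, ∑ i ∈ range M, ∑ k ∈ range M,
      (Y (i,j) ω * Y (i,l) ω) * (Y (k,j) ω * Y (k,l) ω)) P :=
    fun j => integrable_finset_sum _ (fun l _ => hint_inner j l)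
  have hintS : Integrable (fun ω => ∑ j ∈ range N, ∑ l ∈ range N,
      (∑ i ∈ range M, Y (i,j) ω * Y (i,l) ω) ^ 2) P := by
    have : Integrable (fun ω => ∑ j ∈ range N, ∑ l ∈ range N, ∑ i ∈ range M, ∑ k ∈ range M,
        (Y (i,j) ω * Y (i,l) ω) * (Y (k,j) ω * Y (k,l) ω)) P :=
      integrable_finset_sum _ (fun j _ => hint_l j)
    refine this.congr (Filter.Eventually.of_forall (fun ω => (hexpand ω).symm))
  refine ⟨hintS, ?_⟩
  have hIS : ∫ ω, (∑ j ∈ range N, ∑ l ∈ range N,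
        (∑ i ∈ range M, Y (i,j) ω * Y (i,l) ω) ^ 2) ∂P
      = ∑ j ∈ range N, ∑ l ∈ range N, ∑ i ∈ range M, ∑ k ∈ range M,
          ∫ ω, (Y (i,j) ω * Y (i,l) ω) * (Y (k,j) ω * Y (k,l) ω) ∂P := by
    rw [integral_congr_ae (Filter.Eventually.of_forall hexpand)]
    rw [integral_finset_sum _ (fun j _ => hint_l j)]
    refine Finset.sum_congr rfl (fun j _ => ?_)
    rw [integral_finset_sum _ (fun l _ => hint_inner j l)]
    refine Finset.sum_congr rfl (fun l _ => ?_)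
    rw [integral_finset_sum _ (fun i _ => integrable_finset_sum _ (fun k _ => hprod4 _ _ _ _))]
    refine Finset.sum_congr rfl (fun i _ => ?_)
    rw [integral_finset_sum _ (fun k _ => hprod4 _ _ _ _)]
  rw [hIS]
  -- bound the fourfold sum termwise
  have hbd : ∑ j ∈ range N, ∑ l ∈ range N, ∑ i ∈ range M, ∑ k ∈ range M,
        ∫ ω, (Y (i,j) ω * Y (i,l) ω) * (Y (k,j) ω * Y (k,l) ω) ∂P
      ≤ ∑ j ∈ range N, ∑ l ∈ range N, ∑ i ∈ range M, ∑ k ∈ range M,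
        ((if i = k ∧ j = l then μ4 else 0)
          + ((if i = k then σ2^2 else 0) + (if j = l then σ2^2 else 0))) := by
    refine Finset.sum_le_sum (fun j _ => Finset.sum_le_sum (fun l _ =>
      Finset.sum_le_sum (fun i _ => Finset.sum_le_sum (fun k _ => hterm i k j l))))
  refine hbd.trans ?_
  -- now compute the three counting sums
  simp only [Finset.sum_add_distrib]
  have T1 : ∑ j ∈ range N, ∑ l ∈ range N, ∑ i ∈ range M, ∑ k ∈ range M,
      (if i = k ∧ j = l then μ4 else 0) = (N : ℝ) * ((M : ℝ) * μ4) := by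
    have inner : ∀ j l : ℕ, (∑ i ∈ range M, ∑ k ∈ range M, if i = k ∧ j = l then μ4 else 0)
        = (M : ℝ) * (if j = l then μ4 else 0) := by
      intro j l
      by_cases hjl : j = l
      · simp only [hjl, and_true, if_pos rfl]
        exact count_diag M μ4
      · simp [hjl]
    simp only [inner, ← Finset.mul_sum]
    rw [count_diag N μ4]
    ring
  have T2 : ∑ j ∈ range N, ∑ l ∈ range N, ∑ i ∈ range M, ∑ k ∈ range M,
      (if i = k then σ2^2 else 0) = (N : ℝ) * (N : ℝ) * ((M : ℝ) * σ2^2) := by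
    simp only [count_diag M (σ2^2), Finset.sum_const, Finset.card_range, nsmul_eq_mul]
    ring
  have T3 : ∑ j ∈ range N, ∑ l ∈ range N, ∑ i ∈ range M, ∑ k ∈ range M,
      (if j = l then σ2^2 else 0) = (N : ℝ) * ((M : ℝ) * (M : ℝ) * σ2^2) := by
    have inner : ∀ j l : ℕ, (∑ i ∈ range M, ∑ k ∈ range M, (if j = l then σ2^2 else 0))
        = (if j = l then (M : ℝ) * (M : ℝ) * σ2^2 else 0) := by
      intro j l
      by_cases hjl : j = l <;>
        simp [hjl, Finset.sum_const, Finset.card_range, mul_assoc]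
    simp only [inner]
    exact count_diag N _
  rw [T1, T2, T3]
  exact le_of_eq (by push_cast; ring)

lemma markov_piece {Ω : Type*} [MeasurableSpace Ω] (P : Measure Ω) [IsProbabilityMeasure P]
    (X : ℕ × ℕ → Ω → ℝ) (hmeas : ∀ p, Measurable (X p))
    (hindep : iIndepFun X P)
    (hident : ∀ p, IdentDistrib (X p) (X (0, 0)) P P)
    (t : ℝ) (hmean : ∫ ω, X (0, 0) ω ∂P = t)
    (hmom4 : Integrable (fun ω => (X (0, 0) ω) ^ 4) P)
    (M N : ℕ) {a : ℝ} (ha : 0 < a) :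
    P {ω | a ≤ ∑ j ∈ Finset.range N, ∑ l ∈ Finset.range N,
        (∑ i ∈ Finset.range M, (X (i,j) ω - t) * (X (i,l) ω - t)) ^ 2}
      ≤ ENNReal.ofReal ((M * N * (∫ ω, (X (0,0) ω - t)^4 ∂P)
        + M * N * (M + N) * (∫ ω, (X (0,0) ω - t)^2 ∂P) ^ 2) / a) := by
  obtain ⟨hint, hbound⟩ := moment_bound P X hmeas hindep hident t hmean hmom4 M N
  have hmark := mul_meas_ge_le_integral_of_nonneg
    (Filter.Eventually.of_forall (fun ω => by positivity : ∀ ω, (0:ℝ) ≤ _)) hint a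
  set B : ℝ := M * N * (∫ ω, (X (0,0) ω - t)^4 ∂P)
        + M * N * (M + N) * (∫ ω, (X (0,0) ω - t)^2 ∂P) ^ 2 with hB
  have h1 : a * (P {ω | a ≤ ∑ j ∈ Finset.range N, ∑ l ∈ Finset.range N,
        (∑ i ∈ Finset.range M, (X (i,j) ω - t) * (X (i,l) ω - t)) ^ 2}).toReal ≤ B :=
    hmark.trans hbound
  have h2 : (P {ω | a ≤ ∑ j ∈ Finset.range N, ∑ l ∈ Finset.range N,
        (∑ i ∈ Finset.range M, (X (i,j) ω - t) * (X (i,l) ω - t)) ^ 2}).toReal ≤ B / a := by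
    rw [le_div_iff₀ ha]
    linarith [h1]
  calc P _ = ENNReal.ofReal ((P _).toReal) := (ENNReal.ofReal_toReal (measure_ne_top P _)).symm
    _ ≤ ENNReal.ofReal (B / a) := ENNReal.ofReal_le_ofReal h2

lemma deterministic_limit (a : ℕ → ℕ → ℝ) (m n : ℕ → ℕ)
    (hm : Tendsto m atTop atTop) (hn : Tendsto n atTop atTop)
    (ρ : ℝ) (hρ : 0 < ρ)
    (hratio : Tendsto (fun s => (m s : ℝ) / (n s : ℝ)) atTop (nhds ρ))
    (c : ℕ) (hc1 : 1 ≤ c) (hcρ : 2 * ρ ≤ (c : ℝ))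
    (H : ∀ q : ℕ, ∀ᶠ k in atTop,
      specNorm (Matrix.of fun (i : Fin (c * 2^(k+1))) (j : Fin (2^(k+1))) => a i j)
        ≤ ((q:ℝ)+1)⁻¹ * Real.sqrt (((c * 2^(k+1) : ℕ) : ℝ) * ((2^(k+1) : ℕ) : ℝ))) :
    Tendsto (fun s => (Real.sqrt ((m s : ℝ) * (n s : ℝ)))⁻¹ *
        specNorm (Matrix.of fun (i : Fin (m s)) (j : Fin (n s)) => a i j))
      atTop (nhds 0) := by
  refine tendsto_order.2 ⟨?_, ?_⟩
  · intro b hb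
    refine Filter.Eventually.of_forall (fun s => lt_of_lt_of_le hb ?_)
    exact mul_nonneg (inv_nonneg.2 (Real.sqrt_nonneg _)) (specNorm_nonneg _)
  · intro ε hε
    have hsc : (0:ℝ) < Real.sqrt c := Real.sqrt_pos.2 (by exact_mod_cast hc1)
    have hsρ : (0:ℝ) < Real.sqrt (ρ/2) := Real.sqrt_pos.2 (by linarith)
    set K0 : ℝ := 2 * Real.sqrt c / Real.sqrt (ρ/2) with hK0
    have hK0pos : 0 < K0 := by positivity
    obtain ⟨q, hq⟩ := exists_nat_gt (K0 / ε)
    have hqε : ((q:ℝ)+1)⁻¹ * K0 < ε := by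
      have hqpos : (0:ℝ) < (q:ℝ) + 1 := by positivity
      rw [inv_mul_lt_iff₀ hqpos]
      calc K0 = (K0/ε) * ε := by field_simp
        _ < ((q:ℝ)+1) * ε := mul_lt_mul_of_pos_right (by linarith) hε
    have e1 : ∀ᶠ s in atTop, 1 ≤ n s := hn.eventually_ge_atTop 1
    have e2 : ∀ᶠ s in atTop, (m s : ℝ)/(n s : ℝ) ∈ Set.Ioo (ρ/2) (2*ρ) :=
      hratio (Ioo_mem_nhds (by linarith) (by linarith))
    obtain ⟨K₁, hK₁⟩ := Filter.eventually_atTop.1 (H q)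
    have e3 : ∀ᶠ s in atTop, 2^K₁ ≤ n s := hn.eventually_ge_atTop _
    filter_upwards [e1, e2, e3] with s hn1 hrs hK₁s
    set k := Nat.log 2 (n s) with hk
    have hklarge : K₁ ≤ k := (Nat.le_log_iff_pow_le (by norm_num) (by omega)).2 hK₁s
    have hspec := hK₁ k hklarge
    have hn0R : (0:ℝ) < (n s : ℝ) := by exact_mod_cast (by omega : 0 < n s)
    have hmlo : ρ/2 * (n s : ℝ) < (m s : ℝ) := by
      have h := hrs.1
      rwa [lt_div_iff₀ hn0R] at h
    have hmhi : (m s : ℝ) < 2*ρ*(n s : ℝ) := by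
      have h := hrs.2
      rwa [div_lt_iff₀ hn0R] at h
    have hnk_up : n s < 2^(k+1) := Nat.lt_pow_succ_log_self (by norm_num) _
    have hnk_lo : 2^k ≤ n s := Nat.pow_log_le_self 2 (by omega)
    have hm_le : m s ≤ c * 2^(k+1) := by
      have h1 : (m s : ℝ) ≤ ((c * 2^(k+1) : ℕ) : ℝ) := by
        push_cast
        calc (m s : ℝ) ≤ 2*ρ*(n s : ℝ) := hmhi.le
          _ ≤ (c:ℝ) * (n s : ℝ) := mul_le_mul_of_nonneg_right hcρ hn0R.le
          _ ≤ (c:ℝ) * (2:ℝ)^(k+1) := by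
              have h2 : (n s : ℝ) ≤ (2:ℝ)^(k+1) := by exact_mod_cast hnk_up.le
              exact mul_le_mul_of_nonneg_left h2 (by positivity)
      exact_mod_cast h1
    have hmono := specNorm_submatrix_le a hm_le hnk_up.le
    set Q : ℝ := (2:ℝ)^k with hQ
    have hQ1 : (1:ℝ) ≤ Q := one_le_pow₀ (by norm_num)
    have hQ0 : (0:ℝ) < Q := by positivity
    have hsqrtMN : Real.sqrt (((c * 2^(k+1) : ℕ) : ℝ) * ((2^(k+1) : ℕ) : ℝ))
        = Real.sqrt c * (2*Q) := by
      have he : ((c * 2^(k+1) : ℕ) : ℝ) * ((2^(k+1) : ℕ) : ℝ) = (c:ℝ) * (2*Q)^2 := by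
        push_cast; ring
      rw [he, Real.sqrt_mul (Nat.cast_nonneg c), Real.sqrt_sq (by positivity)]
    rw [hsqrtMN] at hspec
    have hQn : Q ≤ (n s : ℝ) := by
      rw [hQ]
      exact_mod_cast hnk_lo
    have hsqrt_lo : Real.sqrt (ρ/2) * Q ≤ Real.sqrt ((m s : ℝ)*(n s : ℝ)) := by
      have h1 : (ρ/2) * Q^2 ≤ (m s : ℝ)*(n s : ℝ) := by
        nlinarith [mul_le_mul hQn hQn hQ0.le hn0R.le, mul_lt_mul_of_pos_right hmlo hn0R]
      calc Real.sqrt (ρ/2) * Q = Real.sqrt ((ρ/2)*Q^2) := by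
            rw [Real.sqrt_mul (by linarith), Real.sqrt_sq hQ0.le]
        _ ≤ _ := Real.sqrt_le_sqrt h1
    have hsqrt_pos : 0 < Real.sqrt ((m s : ℝ)*(n s : ℝ)) :=
      lt_of_lt_of_le (by positivity) hsqrt_lo
    have hinv : (Real.sqrt ((m s : ℝ)*(n s : ℝ)))⁻¹ ≤ (Real.sqrt (ρ/2) * Q)⁻¹ :=
      inv_anti₀ (by positivity) hsqrt_lo
    have hb1 : specNorm (Matrix.of fun (i : Fin (m s)) (j : Fin (n s)) => a i j)
        ≤ ((q:ℝ)+1)⁻¹ * (Real.sqrt c * (2*Q)) := hmono.trans hspec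
    have hfinal : (Real.sqrt ((m s : ℝ) * (n s : ℝ)))⁻¹ *
        specNorm (Matrix.of fun (i : Fin (m s)) (j : Fin (n s)) => a i j)
        ≤ ((q:ℝ)+1)⁻¹ * K0 := by
      calc (Real.sqrt ((m s : ℝ) * (n s : ℝ)))⁻¹ *
          specNorm (Matrix.of fun (i : Fin (m s)) (j : Fin (n s)) => a i j)
          ≤ (Real.sqrt (ρ/2) * Q)⁻¹ * (((q:ℝ)+1)⁻¹ * (Real.sqrt c * (2*Q))) := by
            refine mul_le_mul hinv hb1 (specNorm_nonneg _) (by positivity)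
        _ = ((q:ℝ)+1)⁻¹ * K0 := by
            rw [hK0]
            field_simp
    exact lt_of_le_of_lt hfinal hqε

lemma le_of_pow4_le_pow4 {a b : ℝ} (ha : 0 ≤ a) (hb : 0 ≤ b) (h : a^4 ≤ b^4) : a ≤ b := by
  by_contra hab
  push_neg at hab
  have : b^4 < a^4 := pow_lt_pow_left₀ hab hb (by norm_num)
  linarith

lemma fin_sum_conv (a : ℕ → ℕ → ℝ) (M N : ℕ) :
    (∑ j : Fin N, ∑ l : Fin N, (∑ i : Fin M, a (i:ℕ) (j:ℕ) * a (i:ℕ) (l:ℕ))^2)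
      = ∑ j ∈ range N, ∑ l ∈ range N, (∑ i ∈ range M, a i j * a i l)^2 := by
  have h1 : ∀ (j l : ℕ), (∑ i : Fin M, a (i:ℕ) j * a (i:ℕ) l) = ∑ i ∈ range M, a i j * a i l :=
    fun j l => Fin.sum_univ_eq_sum_range (fun i => a i j * a i l) M
  calc ∑ j : Fin N, ∑ l : Fin N, (∑ i : Fin M, a (i:ℕ) (j:ℕ) * a (i:ℕ) (l:ℕ))^2
      = ∑ j : Fin N, ∑ l : Fin N, (∑ i ∈ range M, a i (j:ℕ) * a i (l:ℕ))^2 :=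
        Finset.sum_congr rfl fun j _ => Finset.sum_congr rfl fun l _ => by rw [h1]
    _ = ∑ j : Fin N, ∑ l ∈ range N, (∑ i ∈ range M, a i (j:ℕ) * a i l)^2 :=
        Finset.sum_congr rfl fun j _ =>
          Fin.sum_univ_eq_sum_range (fun l => (∑ i ∈ range M, a i (j:ℕ) * a i l)^2) N
    _ = ∑ j ∈ range N, ∑ l ∈ range N, (∑ i ∈ range M, a i j * a i l)^2 :=
        Fin.sum_univ_eq_sum_range (fun j => ∑ l ∈ range N, (∑ i ∈ range M, a i j * a i l)^2) N



end AuxSpectral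

open Finset in
/-- for an array of i.i.d. nonnegative random variables with
mean `t` and bounded fourth moment, the scaled matrices `M/√(mn)` converge
almost surely in spectral norm to the rank-one mean matrix
`t 1_m 1_nᵀ/√(mn)` as `m, n → ∞` with `m/n → ρ > 0`. -/
theorem matrix_concentration_rank_one {Ω : Type*} [MeasurableSpace Ω]
    (P : Measure Ω) [IsProbabilityMeasure P]
    (X : ℕ × ℕ → Ω → ℝ) (hmeas : ∀ p, Measurable (X p))
    (hindep : iIndepFun X P)
    (hident : ∀ p, IdentDistrib (X p) (X (0, 0)) P P)
    (t : ℝ) (hmean : ∫ ω, X (0, 0) ω ∂P = t)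
    (hnonneg : ∀ p ω, 0 ≤ X p ω)
    (hmom4 : Integrable (fun ω => (X (0, 0) ω) ^ 4) P)
    (m n : ℕ → ℕ) (hm : Tendsto m atTop atTop) (hn : Tendsto n atTop atTop)
    (ρ : ℝ) (hρ : 0 < ρ)
    (hratio : Tendsto (fun s => (m s : ℝ) / (n s : ℝ)) atTop (nhds ρ)) :
    ∀ᵐ ω ∂P, Tendsto (fun s => specNorm
        ((Real.sqrt ((m s : ℝ) * (n s : ℝ)))⁻¹ •
          (Matrix.of (fun (i : Fin (m s)) (j : Fin (n s)) => X ((i : ℕ), (j : ℕ)) ω)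
            - t • Matrix.of (fun _ _ => (1:ℝ)))))
      atTop (nhds 0) := by
  classical
  have hμ4nn : 0 ≤ ∫ ω, (X (0,0) ω - t)^4 ∂P := integral_nonneg fun ω => by positivity
  have hσ2nn : 0 ≤ ∫ ω, (X (0,0) ω - t)^2 ∂P := integral_nonneg fun ω => by positivity
  set c : ℕ := ⌈2 * ρ⌉₊ with hcdef
  have hc1 : 1 ≤ c := (Nat.ceil_pos.2 (by positivity))
  have hcρ : 2 * ρ ≤ (c:ℝ) := Nat.le_ceil _
  -- Borel–Cantelli for each q
  have hBC : ∀ q : ℕ, ∀ᵐ ω ∂P, ∀ᶠ k in atTop,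
      (∑ j ∈ Finset.range (2^(k+1)), ∑ l ∈ Finset.range (2^(k+1)),
        (∑ i ∈ Finset.range (c * 2^(k+1)), (X (i,j) ω - t) * (X (i,l) ω - t)) ^ 2)
      < (((q:ℝ)+1)⁻¹) ^ 4 * (((c * 2^(k+1) : ℕ):ℝ) * ((2^(k+1) : ℕ):ℝ)) ^ 2 := by
    intro q
    have hε0 : (0:ℝ) < ((q:ℝ)+1)⁻¹ := by positivity
    set ε : ℝ := ((q:ℝ)+1)⁻¹ with hεdef
    set μ4 : ℝ := ∫ ω, (X (0,0) ω - t)^4 ∂P with hμ4def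
    set σ2 : ℝ := ∫ ω, (X (0,0) ω - t)^2 ∂P with hσ2def
    set D : ℝ := (μ4 + 2 * σ2^2) / ε^4 with hDdef
    have hD0 : 0 ≤ D := by positivity
    set A : ℕ → Set Ω := fun k => {ω |
      ε ^ 4 * (((c * 2^(k+1) : ℕ):ℝ) * ((2^(k+1) : ℕ):ℝ)) ^ 2
        ≤ ∑ j ∈ Finset.range (2^(k+1)), ∑ l ∈ Finset.range (2^(k+1)),
          (∑ i ∈ Finset.range (c * 2^(k+1)), (X (i,j) ω - t) * (X (i,l) ω - t)) ^ 2} with hAdef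
    have hPA : ∀ k : ℕ, P (A k) ≤ ENNReal.ofReal D * (ENNReal.ofReal (1/2))^k := by
      intro k
      have hMpos : (0:ℝ) < ((c * 2^(k+1) : ℕ):ℝ) := by
        have h0 : 0 < c * 2^(k+1) := by positivity
        exact_mod_cast h0
      have hNpos : (0:ℝ) < ((2^(k+1) : ℕ):ℝ) := by
        have h0 : 0 < 2^(k+1) := by positivity
        exact_mod_cast h0
      have hapos : 0 < ε^4 * (((c * 2^(k+1) : ℕ):ℝ) * ((2^(k+1) : ℕ):ℝ))^2 := by positivity
      have hmar := markov_piece P X hmeas hindep hident t hmean hmom4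
        (c * 2^(k+1)) (2^(k+1)) hapos
      refine le_trans hmar ?_
      rw [← ENNReal.ofReal_pow (by norm_num : (0:ℝ) ≤ 1/2), ← ENNReal.ofReal_mul hD0]
      refine ENNReal.ofReal_le_ofReal ?_
      -- real bound : B / a ≤ D * (1/2)^k
      have hQ1 : (1:ℝ) ≤ (2:ℝ)^k := one_le_pow₀ (by norm_num)
      have hQpos : (0:ℝ) < (2:ℝ)^k := by positivity
      rw [← hμ4def, ← hσ2def] at hmar ⊢
      have hDa : D * (1/2:ℝ)^k
          = ((μ4 + 2*σ2^2) * (((c * 2^(k+1) : ℕ):ℝ) * ((2^(k+1) : ℕ):ℝ))^2 / 2^k)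
            / (ε^4 * (((c * 2^(k+1) : ℕ):ℝ) * ((2^(k+1) : ℕ):ℝ))^2) := by
        rw [hDdef, div_pow, one_pow]
        field_simp
      rw [hDa]
      have key : ((c * 2^(k+1) : ℕ):ℝ) * ((2^(k+1) : ℕ):ℝ) * μ4
          + ((c * 2^(k+1) : ℕ):ℝ) * ((2^(k+1) : ℕ):ℝ)
            * (((c * 2^(k+1) : ℕ):ℝ) + ((2^(k+1) : ℕ):ℝ)) * σ2^2
          ≤ (μ4 + 2*σ2^2) * (((c * 2^(k+1) : ℕ):ℝ) * ((2^(k+1) : ℕ):ℝ))^2 / 2^k := by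
        rw [le_div_iff₀ hQpos]
        have hC1 : (1:ℝ) ≤ (c:ℝ) := by exact_mod_cast hc1
        have hcert1 : (0:ℝ) ≤ 4*(c:ℝ)*((2:ℝ)^k)^3*μ4*(4*(c:ℝ)*(2:ℝ)^k - 1) := by
          have h1 : (1:ℝ) ≤ 4*(c:ℝ)*(2:ℝ)^k := by nlinarith
          have h2 : (0:ℝ) ≤ 4*(c:ℝ)*((2:ℝ)^k)^3*μ4 := by positivity
          nlinarith
        have hcert2 : (0:ℝ) ≤ 8*(c:ℝ)*((2:ℝ)^k)^4*σ2^2*(3*(c:ℝ) - 1) := by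
          have h2 : (0:ℝ) ≤ 8*(c:ℝ)*((2:ℝ)^k)^4*σ2^2 := by positivity
          nlinarith
        push_cast
        simp only [pow_succ]
        nlinarith [hcert1, hcert2]
      exact (div_le_div_iff_of_pos_right hapos).2 key
    have htsum : (∑' k, P (A k)) ≠ ⊤ := by
      have hle := ENNReal.tsum_le_tsum hPA
      have hgeo : ∑' k : ℕ, ENNReal.ofReal D * (ENNReal.ofReal (1/2))^k
          = ENNReal.ofReal D * (1 - ENNReal.ofReal (1/2))⁻¹ := by
        rw [ENNReal.tsum_mul_left, ENNReal.tsum_geometric]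
      have hlt1 : ENNReal.ofReal (1/2) < 1 := by
        rw [ENNReal.ofReal_lt_one]; norm_num
      have hne : (1 - ENNReal.ofReal (1/2))⁻¹ ≠ ⊤ := by
        rw [Ne, ENNReal.inv_eq_top, tsub_eq_zero_iff_le]
        exact not_le.2 hlt1
      refine ne_top_of_le_ne_top ?_ hle
      rw [hgeo]
      exact ENNReal.mul_ne_top ENNReal.ofReal_ne_top hne
    filter_upwards [MeasureTheory.ae_eventually_notMem htsum] with ω hω
    filter_upwards [hω] with k hk
    have hk' : ω ∉ A k := hk
    simp only [hAdef, Set.mem_setOf_eq] at hk'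
    exact not_le.1 hk'
  have hAE := MeasureTheory.ae_all_iff.2 hBC
  filter_upwards [hAE] with ω hω
  set a : ℕ → ℕ → ℝ := fun i j => X (i,j) ω - t with hadef
  have hgoal_eq : (fun s : ℕ => specNorm ((Real.sqrt ((m s : ℝ) * (n s : ℝ)))⁻¹ •
      (Matrix.of (fun (i : Fin (m s)) (j : Fin (n s)) => X ((i : ℕ), (j : ℕ)) ω)
        - t • Matrix.of (fun _ _ => (1:ℝ)))))
      = fun s => (Real.sqrt ((m s : ℝ) * (n s : ℝ)))⁻¹ *
          specNorm (Matrix.of fun (i : Fin (m s)) (j : Fin (n s)) => a (i:ℕ) (j:ℕ)) := by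
    funext s
    have hmx : (Matrix.of (fun (i : Fin (m s)) (j : Fin (n s)) => X ((i : ℕ), (j : ℕ)) ω)
        - t • Matrix.of (fun _ _ => (1:ℝ)))
        = Matrix.of fun (i : Fin (m s)) (j : Fin (n s)) => a (i:ℕ) (j:ℕ) := by
      ext i j
      simp [hadef, Matrix.sub_apply, Matrix.smul_apply, Matrix.of_apply]
    rw [hmx, specNorm_smul, abs_of_nonneg (inv_nonneg.2 (Real.sqrt_nonneg _))]
  rw [hgoal_eq]
  refine deterministic_limit a m n hm hn ρ hρ hratio c hc1 hcρ ?_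
  intro q
  filter_upwards [hω q] with k hk
  set Bm : Matrix (Fin (c * 2^(k+1))) (Fin (2^(k+1))) ℝ :=
    Matrix.of fun i j => a (i:ℕ) (j:ℕ) with hBm
  have hBmab : ∀ (i : Fin (c * 2^(k+1))) (j : Fin (2^(k+1))), Bm i j = a (i:ℕ) (j:ℕ) :=
    fun i j => rfl
  have h4 : specNorm Bm ^ 4 ≤ ∑ j ∈ Finset.range (2^(k+1)), ∑ l ∈ Finset.range (2^(k+1)),
      (∑ i ∈ Finset.range (c * 2^(k+1)), (X (i,j) ω - t) * (X (i,l) ω - t)) ^ 2 := by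
    calc specNorm Bm ^ 4
        ≤ ∑ j : Fin (2^(k+1)), ∑ l : Fin (2^(k+1)),
            (∑ i : Fin (c * 2^(k+1)), Bm i j * Bm i l) ^ 2 := specNorm_pow_four_le Bm
      _ = ∑ j ∈ Finset.range (2^(k+1)), ∑ l ∈ Finset.range (2^(k+1)),
            (∑ i ∈ Finset.range (c * 2^(k+1)), a i j * a i l) ^ 2 := by
          simp only [hBmab]
          exact fin_sum_conv a _ _
      _ = ∑ j ∈ Finset.range (2^(k+1)), ∑ l ∈ Finset.range (2^(k+1)),
            (∑ i ∈ Finset.range (c * 2^(k+1)), (X (i,j) ω - t) * (X (i,l) ω - t)) ^ 2 := by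
          simp only [hadef]
  have hsqrtnn : (0:ℝ) ≤ ((c * 2^(k+1) : ℕ):ℝ) * ((2^(k+1) : ℕ):ℝ) := by positivity
  have hrhs : (((q:ℝ)+1)⁻¹ * Real.sqrt (((c * 2^(k+1) : ℕ):ℝ) * ((2^(k+1) : ℕ):ℝ)))^4
      = (((q:ℝ)+1)⁻¹)^4 * (((c * 2^(k+1) : ℕ):ℝ) * ((2^(k+1) : ℕ):ℝ))^2 := by
    rw [mul_pow]
    congr 1
    rw [show (4:ℕ) = 2*2 from rfl, pow_mul, Real.sq_sqrt hsqrtnn]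
  refine le_of_pow4_le_pow4 (specNorm_nonneg _) (by positivity) ?_
  rw [hrhs]
  exact le_of_lt (lt_of_le_of_lt h4 hk)
end
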